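/- For every finite set of clocks X and every bound function K : X → ℕ, the set of K-bounded zones over X is finite. Consequently, every zone Z over X is contained in a smallest K-bounded zone: there is a K-bounded zone Z' with Z ⊆ Z' such that every K-bounded zone containing Z contains Z'. -/

import Mathlib

open Classical

namespace Timed

/-- A clock valuation assigns a nonnegative real to every clock. -/
abbrev Val (X : Type) := X → NNReal

/-- Time elapse on valuations: `(v+δ)(x) = v(x)+δ`. -/
noncomputable def addVal {X : Type} (v : Val X) (δ : NNReal) : Val X := fun x => v x + δ

/-- Reset of the clocks in `Y` to `0`. -/
noncomputable def resetVal {X : Type} (Y : Set X) (v : Val X) : Val X :=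
  fun x => if x ∈ Y then 0 else v x

/-- Comparison operators `<, ≤, =, ≥, >`. -/
inductive CmpOp | lt | le | eq | ge | gt

def CmpOp.holds : CmpOp → ℝ → ℝ → Prop
  | .lt, a, b => a < b
  | .le, a, b => a ≤ b
  | .eq, a, b => a = b
  | .ge, a, b => a ≥ b
  | .gt, a, b => a > b

/-- Clock constraints: finite conjunctions of `x ⋈ c` and `x - y ⋈ c` (and `true`). -/
inductive ClockConstraint (X : Type) where
  | tt : ClockConstraint X
  | single : X → CmpOp → ℤ → ClockConstraint X
  | diag : X → X → CmpOp → ℤ → ClockConstraint X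
  | conj : ClockConstraint X → ClockConstraint X → ClockConstraint X

def ClockConstraint.sat {X : Type} (v : Val X) : ClockConstraint X → Prop
  | .tt => True
  | .single x op c => op.holds (v x : ℝ) (c : ℝ)
  | .diag x y op c => op.holds ((v x : ℝ) - (v y : ℝ)) (c : ℝ)
  | .conj g₁ g₂ => g₁.sat v ∧ g₂.sat v

/-- `⟦g⟧`, the set of valuations satisfying `g`. -/
def sem {X : Type} (g : ClockConstraint X) : Set (Val X) := {v | g.sat v}

/-- A zone is a set of valuations definable by a clock constraint. -/
def IsZone {X : Type} (Z : Set (Val X)) : Prop := ∃ g : ClockConstraint X, Z = sem g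

/-- Future (time elapse) of a set of valuations. -/
def future {X : Type} (W : Set (Val X)) : Set (Val X) :=
  {w | ∃ v ∈ W, ∃ δ : NNReal, w = addVal v δ}

/-- Reset of a set of valuations: `[Y]W`. -/
def resetSet {X : Type} (Y : Set X) (W : Set (Val X)) : Set (Val X) :=
  resetVal Y '' W

/-- A timed automaton `(Q, X, q₀, T, F)`. -/
structure Automaton (Q X : Type) where
  init : Q
  trans : Set (Q × ClockConstraint X × Set X × Q)
  final : Set Q

/-- `Post_t(W) = {v' : ∃ v ∈ W, ∃ δ ≥ 0, v ⊨ g ∧ v' = [Y]v + δ}` for `t = (q,g,Y,q')`. -/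
def Post {Q X : Type} (t : Q × ClockConstraint X × Set X × Q) (W : Set (Val X)) :
    Set (Val X) :=
  {w | ∃ v ∈ W, ∃ δ : NNReal, t.2.1.sat v ∧ w = addVal (resetVal t.2.2.1 v) δ}

/-- The zero valuation. -/
def zeroVal (X : Type) : Val X := fun _ => 0

/-- One step of the semantics: a time elapse or a discrete transition. -/
inductive Step {Q X : Type} (A : Automaton Q X) : (Q × Val X) → (Q × Val X) → Prop
  | delay (q : Q) (v : Val X) (δ : NNReal) : Step A (q, v) (q, addVal v δ)
  | disc {q : Q} {v : Val X} {g : ClockConstraint X} {R : Set X} {q₁ : Q}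
      (ht : (q, g, R, q₁) ∈ A.trans) (hg : g.sat v) :
      Step A (q, v) (q₁, resetVal R v)

/-- A configuration is reachable if some finite run from `(q₀, 0)` ends in it. -/
def Reachable {Q X : Type} (A : Automaton Q X) (c : Q × Val X) : Prop :=
  Relation.ReflTransGen (Step A) (A.init, zeroVal X) c

/-- The initial zone `Z₀ = future {0}`. -/
def initZone (X : Type) : Set (Val X) := future {zeroVal X}

/-- The set `S` of reachable symbolic states: least set containing `(q₀, Z₀)` and
closed under nonempty `Post`. -/
inductive SymbReach {Q X : Type} (A : Automaton Q X) : Q × Set (Val X) → Prop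
  | init : SymbReach A (A.init, initZone X)
  | step {q : Q} {Z : Set (Val X)} {g : ClockConstraint X} {Y : Set X} {q' : Q}
      (h : SymbReach A (q, Z)) (ht : (q, g, Y, q') ∈ A.trans)
      (hne : Post (q, g, Y, q') Z ≠ ∅) :
      SymbReach A (q', Post (q, g, Y, q') Z)

/-- `N` is saturated w.r.t. the extrapolation operator `extra`. -/
def ExtraSaturated {Q X : Type} (A : Automaton Q X)
    (extra : Q → Set (Val X) → Set (Val X)) (N : Set (Q × Set (Val X))) : Prop :=
  (∃ Z'', (A.init, Z'') ∈ N ∧ extra A.init (initZone X) ⊆ Z'') ∧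
  ∀ q Z, (q, Z) ∈ N → ∀ g Y q', (q, g, Y, q') ∈ A.trans →
    Post (q, g, Y, q') Z ≠ ∅ →
    ∃ Z'', (q', Z'') ∈ N ∧ extra q' (Post (q, g, Y, q') Z) ⊆ Z''

/-- A `K`-bounded clock constraint: every `x ⋈ c` has `-K x ≤ c ≤ K x` and
every `x - y ⋈ c` has `-K y ≤ c ≤ K x`. -/
def KBounded {X : Type} (K : X → ℕ) : ClockConstraint X → Prop
  | .tt => True
  | .single x _ c => -(K x : ℤ) ≤ c ∧ c ≤ (K x : ℤ)
  | .diag x y _ c => -(K y : ℤ) ≤ c ∧ c ≤ (K x : ℤ)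
  | .conj g₁ g₂ => KBounded K g₁ ∧ KBounded K g₂

/-- A `K`-bounded zone. -/
def IsKBoundedZone {X : Type} (K : X → ℕ) (Z : Set (Val X)) : Prop :=
  ∃ g : ClockConstraint X, KBounded K g ∧ Z = sem g

/-- An `LU`-bounded clock constraint: every `x ⋈ c` has `-U x ≤ c ≤ L x` and
every `x - y ⋈ c` has `-U y ≤ c ≤ L x`. -/
def LUBounded {X : Type} (L U : X → ℕ) : ClockConstraint X → Prop
  | .tt => True
  | .single x _ c => -(U x : ℤ) ≤ c ∧ c ≤ (L x : ℤ)
  | .diag x y _ c => -(U y : ℤ) ≤ c ∧ c ≤ (L x : ℤ)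
  | .conj g₁ g₂ => LUBounded L U g₁ ∧ LUBounded L U g₂

/-- An `LU`-bounded zone. -/
def IsLUBoundedZone {X : Type} (L U : X → ℕ) (Z : Set (Val X)) : Prop :=
  ∃ g : ClockConstraint X, LUBounded L U g ∧ Z = sem g

/-- A diagonal-free clock constraint. -/
def DiagFree {X : Type} : ClockConstraint X → Prop
  | .tt => True
  | .single _ _ _ => True
  | .diag _ _ _ _ => False
  | .conj g₁ g₂ => DiagFree g₁ ∧ DiagFree g₂

/-- Every atomic constraint `x ⋈ c` of the guard satisfies `c ≤ K x`. -/
def GuardKBounded {X : Type} (K : X → ℕ) : ClockConstraint X → Prop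
  | .tt => True
  | .single x _ c => c ≤ (K x : ℤ)
  | .diag _ _ _ _ => True
  | .conj g₁ g₂ => GuardKBounded K g₁ ∧ GuardKBounded K g₂

/-- `LU`-boundedness of guards: `x < c`, `x ≤ c` need `c ≤ U x`; `x > d`, `x ≥ d`
need `d ≤ L x`; `x = c` needs both. -/
def GuardLUBounded {X : Type} (L U : X → ℕ) : ClockConstraint X → Prop
  | .tt => True
  | .single x op c =>
      match op with
      | .lt => c ≤ (U x : ℤ)
      | .le => c ≤ (U x : ℤ)
      | .gt => c ≤ (L x : ℤ)
      | .ge => c ≤ (L x : ℤ)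
      | .eq => c ≤ (U x : ℤ) ∧ c ≤ (L x : ℤ)
  | .diag _ _ _ _ => True
  | .conj g₁ g₂ => GuardLUBounded L U g₁ ∧ GuardLUBounded L U g₂

/-- A (strong timed) simulation: a preorder relating only configurations with the same
state, compatible with time elapses and discrete transitions. -/
def IsSimulation {Q X : Type} (A : Automaton Q X)
    (R : (Q × Val X) → (Q × Val X) → Prop) : Prop :=
  (∀ c, R c c) ∧
  (∀ c₁ c₂ c₃, R c₁ c₂ → R c₂ c₃ → R c₁ c₃) ∧
  (∀ c c', R c c' → c.1 = c'.1) ∧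
  (∀ q v v', R (q, v) (q, v') →
    (∀ δ : NNReal, R (q, addVal v δ) (q, addVal v' δ)) ∧
    (∀ g Y q₁, (q, g, Y, q₁) ∈ A.trans → g.sat v →
      g.sat v' ∧ R (q₁, resetVal Y v) (q₁, resetVal Y v')))

/-- Labels of run steps: a delay, or a discrete transition. -/
inductive RunLabel (Q X : Type) where
  | delay : NNReal → RunLabel Q X
  | disc : Q × ClockConstraint X × Set X × Q → RunLabel Q X

/-- Finite runs with an explicit sequence of delays and transitions. -/
inductive LRun {Q X : Type} (A : Automaton Q X) :
    (Q × Val X) → List (RunLabel Q X) → (Q × Val X) → Prop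
  | refl (c : Q × Val X) : LRun A c [] c
  | delay {q : Q} {v : Val X} (δ : NNReal) {l : List (RunLabel Q X)} {c' : Q × Val X}
      (h : LRun A (q, addVal v δ) l c') : LRun A (q, v) (RunLabel.delay δ :: l) c'
  | disc {q : Q} {v : Val X} {g : ClockConstraint X} {Y : Set X} {q₁ : Q}
      {l : List (RunLabel Q X)} {c' : Q × Val X}
      (ht : (q, g, Y, q₁) ∈ A.trans) (hg : g.sat v)
      (h : LRun A (q₁, resetVal Y v) l c') :
      LRun A (q, v) (RunLabel.disc (q, g, Y, q₁) :: l) c'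

/-- `N` is saturated w.r.t. the simulation `R`. -/
def SimSaturated {Q X : Type} (A : Automaton Q X)
    (R : (Q × Val X) → (Q × Val X) → Prop) (N : Set (Q × Set (Val X))) : Prop :=
  (∃ Z'', (A.init, Z'') ∈ N ∧ ∀ v ∈ initZone X, ∃ v' ∈ Z'', R (A.init, v) (A.init, v')) ∧
  ∀ q Z, (q, Z) ∈ N → ∀ g Y q', (q, g, Y, q') ∈ A.trans →
    Post (q, g, Y, q') Z ≠ ∅ →
    ∃ Z'', (q', Z'') ∈ N ∧ ∀ v ∈ Post (q, g, Y, q') Z, ∃ v' ∈ Z'', R (q', v) (q', v')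

/-- Atomic constraints, allowing the zero clock `x₀` on the left of a difference. -/
inductive Atom (X : Type) where
  | single : X → CmpOp → ℤ → Atom X
  | negSingle : X → CmpOp → ℤ → Atom X    -- `x₀ - y ⋈ c`
  | diag : X → X → CmpOp → ℤ → Atom X

def Atom.sat {X : Type} (v : Val X) : Atom X → Prop
  | .single x op c => op.holds (v x : ℝ) (c : ℝ)
  | .negSingle y op c => op.holds (-(v y : ℝ)) (c : ℝ)
  | .diag x y op c => op.holds ((v x : ℝ) - (v y : ℝ)) (c : ℝ)

/-- `pre(φ, Y)` of an atomic constraint w.r.t. a reset set `Y`. -/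
noncomputable def preAtom {X : Type} (Y : Set X) : Atom X → Set (Atom X)
  | .single x op c => if x ∈ Y then ∅ else {Atom.single x op c}
  | .negSingle y op c => if y ∈ Y then ∅ else {Atom.negSingle y op c}
  | .diag x y op c =>
      if x ∈ Y then (if y ∈ Y then ∅ else {Atom.negSingle y op c})
      else (if y ∈ Y then {Atom.single x op c} else {Atom.diag x y op c})

/-- The set of atomic constraints of a guard. -/
def atomsOf {X : Type} : ClockConstraint X → Set (Atom X)
  | .tt => ∅
  | .single x op c => {Atom.single x op c}
  | .diag x y op c => {Atom.diag x y op c}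
  | .conj g₁ g₂ => atomsOf g₁ ∪ atomsOf g₂

/-- One step of the fixpoint equations defining the constraint map `G`. -/
noncomputable def cmapStep {Q X : Type} (A : Automaton Q X)
    (G : Q → Set (Atom X)) (q : Q) : Set (Atom X) :=
  {φ | ∃ g Y q', (q, g, Y, q') ∈ A.trans ∧
        (φ ∈ atomsOf g ∨ ∃ ψ ∈ G q', φ ∈ preAtom Y ψ)}

/-- The `G`-preorder: `(q,v) ≼_G (q,v')` iff for all `δ` and all `φ ∈ G q`,
`v+δ ⊨ φ` implies `v'+δ ⊨ φ` (only configurations with the same state are related). -/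
def GPre {Q X : Type} (G : Q → Set (Atom X)) (c c' : Q × Val X) : Prop :=
  c.1 = c'.1 ∧
  ∀ δ : NNReal, ∀ φ ∈ G c.1, Atom.sat (addVal c.2 δ) φ → Atom.sat (addVal c'.2 δ) φ

end Timed
open Timed

instance : Finite CmpOp :=
  Finite.of_surjective (fun n : Fin 5 => match n with
    | 0 => CmpOp.lt | 1 => CmpOp.le | 2 => CmpOp.eq | 3 => CmpOp.ge | 4 => CmpOp.gt)
    (fun o => by cases o
                 · exact ⟨0, rfl⟩
                 · exact ⟨1, rfl⟩
                 · exact ⟨2, rfl⟩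
                 · exact ⟨3, rfl⟩
                 · exact ⟨4, rfl⟩)

/-- there are finitely many `K`-bounded zones; consequently every zone
is contained in a smallest `K`-bounded zone. -/
theorem kbounded_zones_finite_and_smallest {X : Type} [Fintype X] (K : X → ℕ) :
    {Z : Set (Val X) | IsKBoundedZone K Z}.Finite ∧
    ∀ Z : Set (Val X), IsZone Z →
      ∃ Z', IsKBoundedZone K Z' ∧ Z ⊆ Z' ∧
        ∀ Z'', IsKBoundedZone K Z'' → Z ⊆ Z'' → Z' ⊆ Z'' := by
    classical
  set N : ℤ := ((Finset.univ.sup K : ℕ) : ℤ) with hNdef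
  have hKN : ∀ x : X, (K x : ℤ) ≤ N := fun x => by
    simpa [hNdef] using (Nat.cast_le (α := ℤ)).mpr (Finset.le_sup (Finset.mem_univ x))
  -- the finite family of atomic sets
  set A : Set (Set (Val X)) :=
    ((fun p : X × CmpOp × ℤ => {v : Val X | p.2.1.holds (v p.1 : ℝ) (p.2.2 : ℝ)}) ''
      (Set.univ ×ˢ Set.univ ×ˢ Set.Icc (-N) N)) ∪
    ((fun p : (X × X) × CmpOp × ℤ =>
        {v : Val X | p.2.1.holds ((v p.1.1 : ℝ) - (v p.1.2 : ℝ)) (p.2.2 : ℝ)}) ''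
      (Set.univ ×ˢ Set.univ ×ˢ Set.Icc (-N) N)) with hAdef
  have hA : A.Finite := by
    apply Set.Finite.union
    · exact Set.Finite.image _
        (Set.finite_univ.prod (Set.finite_univ.prod (Set.finite_Icc _ _)))
    · exact Set.Finite.image _
        (Set.finite_univ.prod (Set.finite_univ.prod (Set.finite_Icc _ _)))
  have key : ∀ g : ClockConstraint X, KBounded K g → ∃ T ⊆ A, sem g = ⋂₀ T := by
    intro g
    induction g with
    | tt =>
        intro _
        exact ⟨∅, Set.empty_subset _, by
          simp [sem, ClockConstraint.sat, Set.sInter_empty]⟩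
    | single x op c =>
        intro hg
        obtain ⟨h1, h2⟩ := hg
        refine ⟨{{v : Val X | op.holds (v x : ℝ) (c : ℝ)}}, ?_, ?_⟩
        · rw [Set.singleton_subset_iff]
          have hc : c ∈ Set.Icc (-N) N :=
            Set.mem_Icc.mpr ⟨by have := hKN x; omega, by have := hKN x; omega⟩
          exact Or.inl ⟨(x, op, c), ⟨Set.mem_univ _, Set.mem_univ _, hc⟩, rfl⟩
        · rw [Set.sInter_singleton]; rfl
    | diag x y op c =>
        intro hg
        obtain ⟨h1, h2⟩ := hg
        refine ⟨{{v : Val X | op.holds ((v x : ℝ) - (v y : ℝ)) (c : ℝ)}}, ?_, ?_⟩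
        · rw [Set.singleton_subset_iff]
          have hc : c ∈ Set.Icc (-N) N :=
            Set.mem_Icc.mpr ⟨by have := hKN y; omega, by have := hKN x; omega⟩
          exact Or.inr ⟨((x, y), op, c), ⟨Set.mem_univ _, Set.mem_univ _, hc⟩, rfl⟩
        · rw [Set.sInter_singleton]; rfl
    | conj g₁ g₂ ih₁ ih₂ =>
        intro hg
        obtain ⟨T₁, hT₁A, hT₁⟩ := ih₁ hg.1
        obtain ⟨T₂, hT₂A, hT₂⟩ := ih₂ hg.2
        refine ⟨T₁ ∪ T₂, Set.union_subset hT₁A hT₂A, ?_⟩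
        rw [Set.sInter_union, ← hT₁, ← hT₂]
        rfl
  have hfin : {Z : Set (Val X) | IsKBoundedZone K Z}.Finite := by
    apply Set.Finite.subset (Set.Finite.image (fun T : Set (Set (Val X)) => ⋂₀ T) hA.finite_subsets)
    rintro Z ⟨g, hg, rfl⟩
    obtain ⟨T, hTA, hT⟩ := key g hg
    exact ⟨T, hTA, hT.symm⟩
  have hsInter : ∀ S : Set (Set (Val X)), S.Finite →
      (∀ W ∈ S, IsKBoundedZone K W) → IsKBoundedZone K (⋂₀ S) := by
    intro S hS
    refine Set.Finite.induction_on
      (motive := fun S _ => (∀ W ∈ S, IsKBoundedZone K W) → IsKBoundedZone K (⋂₀ S)) S hS ?_ ?_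
    · intro _
      exact ⟨ClockConstraint.tt, trivial, by
        simp [sem, ClockConstraint.sat, Set.sInter_empty]⟩
    · intro a s ha hsfin ih h
      obtain ⟨g, hg, hgeq⟩ := h _ (Set.mem_insert _ _)
      obtain ⟨g', hg', heq⟩ := ih (fun W hW => h W (Set.mem_insert_of_mem _ hW))
      refine ⟨ClockConstraint.conj g g', ⟨hg, hg'⟩, ?_⟩
      rw [Set.sInter_insert, hgeq, heq]
      rfl
  refine ⟨hfin, fun Z _ => ?_⟩
  set F : Set (Set (Val X)) := {Z'' | IsKBoundedZone K Z'' ∧ Z ⊆ Z''} with hFdef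
  have hFfin : F.Finite := hfin.subset (fun W hW => hW.1)
  refine ⟨⋂₀ F, hsInter F hFfin (fun W hW => hW.1), ?_, ?_⟩
  · exact Set.subset_sInter (fun W hW => hW.2)
  · intro Z'' h1 h2
    exact Set.sInter_subset_of_mem ⟨h1, h2⟩
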